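/- Let {P_m}_{m=0}^{M-1} and {Q_n}_{n=0}^{N-1} be two families of mutually orthogonal projections each summing to the identity on a finite-dimensional Hilbert space, such that {Q_n} refines {P_m}: for every m there is a subset Λ_m ⊆ {0,…,N-1} with P_m = Σ_{n∈Λ_m} Q_n, and the Λ_m partition {0,…,N-1}. Then for every density operator ρ, 1 - Σ_n Tr[(Q_n √ρ Q_n)^2] ≥ 1 - Σ_m Tr[(P_m √ρ P_m)^2]. -/

import Mathlib

open scoped ComplexOrder Matrix

open Classical in
/-- The positive semidefinite square root of a matrix (zero if not psd). -/
noncomputable def msqrt {d : ℕ} (ρ : Matrix (Fin d) (Fin d) ℂ) : Matrix (Fin d) (Fin d) ℂ :=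
  if h : ρ.PosSemidef then
    (h.1.eigenvectorUnitary : Matrix (Fin d) (Fin d) ℂ) *
      Matrix.diagonal ((↑) ∘ (Real.sqrt ·) ∘ h.1.eigenvalues) *
      (star h.1.eigenvectorUnitary : Matrix (Fin d) (Fin d) ℂ)
  else 0

lemma trace_mul_conjTranspose_re_nonneg {d : ℕ} (M : Matrix (Fin d) (Fin d) ℂ) :
    0 ≤ (M * Mᴴ).trace.re := by
  simp only [Matrix.trace, Matrix.diag, Matrix.mul_apply, Matrix.conjTranspose_apply,
    Complex.re_sum]
  apply Finset.sum_nonneg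
  intro i _
  apply Finset.sum_nonneg
  intro j _
  have : M i j * star (M i j) = (Complex.normSq (M i j) : ℂ) := Complex.mul_conj _
  rw [this]
  simp [Complex.normSq_nonneg]

/-- Order-preserving property: if `{Q_n}` refines `{P_m}` (each `P_m = Σ_{n∈Λ_m} Q_n`
with the `Λ_m` partitioning the index set), then the generalized 1/2-affinity of
coherence with respect to `Q` is at least that with respect to `P`. -/
theorem affinity_coherence_order_preserving {d M N : ℕ}
    (P : Fin M → Matrix (Fin d) (Fin d) ℂ) (Q : Fin N → Matrix (Fin d) (Fin d) ℂ)
    (hPh : ∀ m, (P m).IsHermitian) (hPi : ∀ m, P m * P m = P m)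
    (hPo : ∀ m m', m ≠ m' → P m * P m' = 0) (hPs : ∑ m, P m = 1)
    (hQh : ∀ n, (Q n).IsHermitian) (hQi : ∀ n, Q n * Q n = Q n)
    (hQo : ∀ n n', n ≠ n' → Q n * Q n' = 0) (hQs : ∑ n, Q n = 1)
    (Λ : Fin M → Finset (Fin N))
    (hdisj : ∀ m m', m ≠ m' → Disjoint (Λ m) (Λ m'))
    (hcover : Finset.univ.biUnion Λ = Finset.univ)
    (hrefine : ∀ m, P m = ∑ n ∈ Λ m, Q n)
    (ρ : Matrix (Fin d) (Fin d) ℂ) (hρ : ρ.PosSemidef) (hρtr : ρ.trace = 1) :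
    1 - ∑ m, ((P m * msqrt ρ * P m) ^ 2).trace.re ≤
      1 - ∑ n, ((Q n * msqrt ρ * Q n) ^ 2).trace.re := by
  set A := msqrt ρ with hAdef
  have hA : A = (hρ.1.eigenvectorUnitary : Matrix (Fin d) (Fin d) ℂ) *
      Matrix.diagonal ((↑) ∘ (Real.sqrt ·) ∘ hρ.1.eigenvalues) *
      (star hρ.1.eigenvectorUnitary : Matrix (Fin d) (Fin d) ℂ) := dif_pos hρ
  have hAh : Aᴴ = A := by
    rw [hA, Matrix.conjTranspose_mul, Matrix.conjTranspose_mul, Matrix.diagonal_conjTranspose]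
    simp [Matrix.mul_assoc, Matrix.star_eq_conjTranspose, Pi.star_def, Function.comp_def]
  have hCH : ∀ n n' : Fin N, (Q n * A * Q n')ᴴ = Q n' * A * Q n := by
    intro n n'
    simp [Matrix.conjTranspose_mul, hAh, (hQh n), (hQh n'), Matrix.mul_assoc,
      Matrix.IsHermitian.eq]
  have main : ∑ n, ((Q n * A * Q n) ^ 2).trace.re ≤ ∑ m, ((P m * A * P m) ^ 2).trace.re := by
    have hsplit : ∑ n, ((Q n * A * Q n) ^ 2).trace.re
        = ∑ m, ∑ n ∈ Λ m, ((Q n * A * Q n) ^ 2).trace.re := by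
      rw [← hcover, Finset.sum_biUnion]
      intro m _ m' _ h
      exact hdisj m m' h
    rw [hsplit]
    apply Finset.sum_le_sum
    intro m _
    -- expand the trace of (P m * A * P m)^2
    have hPexp : P m * A * P m = ∑ n ∈ Λ m, ∑ n' ∈ Λ m, Q n * A * Q n' := by
      rw [hrefine m, Finset.sum_mul, Finset.sum_mul_sum]
    have hexp : ((P m * A * P m) ^ 2).trace
        = ∑ n ∈ Λ m, ∑ n' ∈ Λ m, ((Q n * A * Q n') * (Q n * A * Q n')ᴴ).trace := by
      rw [pow_two, hPexp, Finset.sum_mul_sum]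
      simp only [Finset.sum_mul, Finset.mul_sum, Matrix.trace_sum]
      apply Finset.sum_congr rfl
      intro n hn
      apply Finset.sum_congr rfl
      intro n' hn'
      -- term structure: ∑ k, ∑ k', (Q n * A * Q k' * (Q n' * A * Q k)).trace
      rw [Finset.sum_eq_single_of_mem n hn]
      · rw [Finset.sum_eq_single_of_mem n' hn']
        · rw [hCH]
        · intro k' hk' hne
          have h0 : Q k' * Q n' = 0 := hQo k' n' hne
          have h1 : (Q n * A * Q k') * (Q n' * A * Q n)
              = Q n * A * (Q k' * Q n') * A * Q n := by
            simp only [Matrix.mul_assoc]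
          rw [h1, h0]
          simp
      · intro k hk hne
        apply Finset.sum_eq_zero
        intro k' _
        rw [Matrix.trace_mul_comm]
        have h0 : Q k * Q n = 0 := hQo k n hne
        have h1 : (Q n' * A * Q k) * (Q n * A * Q k')
            = Q n' * A * (Q k * Q n) * A * Q k' := by
          simp only [Matrix.mul_assoc]
        rw [h1, h0]
        simp
    rw [hexp, Complex.re_sum]
    apply Finset.sum_le_sum
    intro n hn
    rw [Complex.re_sum]
    have hdiag : ((Q n * A * Q n) ^ 2).trace.re
        = ((Q n * A * Q n) * (Q n * A * Q n)ᴴ).trace.re := by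
      rw [pow_two, hCH]
    rw [hdiag]
    exact Finset.single_le_sum (f := fun n' => ((Q n * A * Q n') * (Q n * A * Q n')ᴴ).trace.re)
      (fun n' _ => trace_mul_conjTranspose_re_nonneg _) hn
  linarith
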